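/- arXiv:1704.00938 — 8 statements merged into one kernel-verified Lean document; each statement's English description precedes it below -/
import Mathlib

section
/- Let a be an additive functional of an SDS φ. For y ∈ E define 𝒳a(y) to be the right derivative of t ↦ a(y, t) at t = 0 (the derivative at 0 within [0,∞)) if it exists, and 0 otherwise. Fix x ∈ E and suppose a(x,·) is absolutely continuous on [0, c(x)) in the sense that there exists a locally integrable function g : [0,∞) → ℝ with a(x, t) = ∫₀ᵗ g(s) ds for all t < c(x). Then a(x, t) = ∫₀ᵗ 𝒳a(φ(s, x)) ds for all t < c(x). -/
open MeasureTheory Filter Topology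

section AuxFTC
open Set Metric

lemma aux_ae_hasDerivAt (h : ℝ → ℝ) (hh : Integrable h (volume : Measure ℝ)) :
    ∀ᵐ s : ℝ, HasDerivAt (fun u => ∫ y in (0:ℝ)..u, h y) (h s) s := by
  filter_upwards [(Besicovitch.vitaliFamily (volume : Measure ℝ)).ae_tendsto_average_norm_sub
    hh.locallyIntegrable] with s hs
  set F : ℝ → ℝ := fun u => ∫ y in (0:ℝ)..u, h y with hF
  have havg : Tendsto (fun r : ℝ => 2 * ⨍ y in closedBall s r, ‖h y - h s‖) (𝓝[>] 0) (𝓝 0) := by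
    have := (hs.comp (Besicovitch.tendsto_filterAt volume s)).const_mul (2:ℝ)
    simpa using this
  rw [hasDerivAt_iff_tendsto_slope]
  rw [tendsto_iff_norm_sub_tendsto_zero]
  have hii : ∀ u v : ℝ, IntervalIntegrable h volume u v := fun u v =>
    hh.intervalIntegrable
  have key : ∀ u : ℝ, u ≠ s →
      ‖slope F s u - h s‖ ≤ 2 * ⨍ y in closedBall s |u - s|, ‖h y - h s‖ := by
    intro u hu
    have hus : u - s ≠ 0 := sub_ne_zero.2 hu
    have hFsub : F u - F s = ∫ y in s..u, h y := intervalIntegral.integral_interval_sub_left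
      (hii 0 u) (hii 0 s)
    have hslope : slope F s u - h s = (u - s)⁻¹ * ∫ y in s..u, (h y - h s) := by
      rw [slope_def_field, hFsub]
      rw [intervalIntegral.integral_sub (hii s u) intervalIntegrable_const,
        intervalIntegral.integral_const, smul_eq_mul]
      field_simp
    rw [hslope]
    have h1 : ‖∫ y in s..u, (h y - h s)‖ ≤ ∫ y in Set.uIoc s u, ‖h y - h s‖ :=
      intervalIntegral.norm_integral_le_integral_norm_uIoc
    have hsub : Set.uIoc s u ⊆ closedBall s |u - s| := by
      intro y hy
      rw [Set.mem_uIoc] at hy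
      rw [mem_closedBall, Real.dist_eq]
      rcases hy with hy | hy
      · rw [abs_of_pos (by linarith [hy.1, hy.2] : (0:ℝ) < y - s)]
        have : |u - s| = u - s := abs_of_pos (by linarith [hy.1, hy.2])
        linarith [hy.2]
      · rw [abs_of_nonpos (by linarith [hy.1, hy.2] : y - s ≤ 0)]
        have : |u - s| = s - u := by rw [abs_of_nonpos (by linarith [hy.1, hy.2] : u - s ≤ 0)]; ring
        linarith [hy.1]
    have hint : IntegrableOn (fun y => ‖h y - h s‖) (closedBall s |u - s|) volume := by
      apply Integrable.norm
      exact hh.integrableOn.sub (integrableOn_const (by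
        rw [Real.volume_closedBall]; exact ENNReal.ofReal_ne_top))
    have h2 : ∫ y in Set.uIoc s u, ‖h y - h s‖ ≤ ∫ y in closedBall s |u - s|, ‖h y - h s‖ :=
      setIntegral_mono_set hint
        (Eventually.of_forall fun y => norm_nonneg _) hsub.eventuallyLE
    have hvol : (volume (closedBall s |u - s|)).toReal = 2 * |u - s| := by
      rw [Real.volume_closedBall, ENNReal.toReal_ofReal (by positivity)]
    have haeq : ∫ y in closedBall s |u - s|, ‖h y - h s‖
        = (2 * |u - s|) * ⨍ y in closedBall s |u - s|, ‖h y - h s‖ := by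
      rw [setAverage_eq, measureReal_def, hvol, smul_eq_mul, ← mul_assoc, mul_inv_cancel₀ (by positivity), one_mul]
    have habs : (0:ℝ) < |u - s| := abs_pos.2 hus
    calc ‖(u - s)⁻¹ * ∫ y in s..u, (h y - h s)‖
        = |u - s|⁻¹ * ‖∫ y in s..u, (h y - h s)‖ := by
          rw [norm_mul, norm_inv, Real.norm_eq_abs, Real.norm_eq_abs]
      _ ≤ |u - s|⁻¹ * ((2 * |u - s|) * ⨍ y in closedBall s |u - s|, ‖h y - h s‖) := by
          rw [← haeq]
          exact mul_le_mul_of_nonneg_left (h1.trans h2) (by positivity)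
      _ = 2 * ⨍ y in closedBall s |u - s|, ‖h y - h s‖ := by
          field_simp
  apply squeeze_zero' (Eventually.of_forall fun u => norm_nonneg _)
  · filter_upwards [self_mem_nhdsWithin] with u (hu : u ≠ s)
    exact key u hu
  · have habs : Tendsto (fun u : ℝ => |u - s|) (𝓝[≠] s) (𝓝[>] 0) := by
      rw [tendsto_nhdsWithin_iff]
      constructor
      · have : Tendsto (fun u : ℝ => |u - s|) (𝓝 s) (𝓝 |s - s|) :=
          ((continuous_id.sub continuous_const).abs).continuousAt
        simpa using this.mono_left nhdsWithin_le_nhds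
      · filter_upwards [self_mem_nhdsWithin] with u (hu : u ≠ s)
        exact abs_pos.2 (sub_ne_zero.2 hu)
    exact havg.comp habs

end AuxFTC

/-- A semi-dynamic system (SDS) on `E` with killing time `c : E → (0, ∞]`. -/
def IsSDS {E : Type*} [MeasurableSpace E] (φ : ℝ → E → E) (c : E → EReal) : Prop :=
  Measurable (fun p : ℝ × E => φ p.1 p.2) ∧
  (∀ x, 0 < c x) ∧
  (∀ x, φ 0 x = x) ∧
  (∀ (x : E) (s t : ℝ), 0 ≤ s → 0 ≤ t → ((s + t : ℝ) : EReal) < c x →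
    φ t (φ s x) = φ (s + t) x) ∧
  (∀ (x : E) (t : ℝ), 0 ≤ t → (t : EReal) < c x → c (φ t x) = c x - (t : EReal))

/-- An additive functional of the SDS `φ`: measurable, right-continuous in time on
`[0, c(x))`, vanishing at `0`, and additive along the flow. -/
def IsAdditiveFunctional {E : Type*} [MeasurableSpace E]
    (φ : ℝ → E → E) (c : E → EReal) (a : E → ℝ → ℝ) : Prop :=
  Measurable (fun p : E × ℝ => a p.1 p.2) ∧
  (∀ (x : E) (t : ℝ), 0 ≤ t → (t : EReal) < c x →
    ContinuousWithinAt (a x) (Set.Ici t) t) ∧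
  (∀ x, a x 0 = 0) ∧
  (∀ (x : E) (s t : ℝ), 0 ≤ s → 0 ≤ t → ((s + t : ℝ) : EReal) < c x →
    a x s + a (φ s x) t = a x (s + t))

theorem stmt_7 {E : Type*} [MeasurableSpace E]
    (φ : ℝ → E → E) (c : E → EReal) (hSDS : IsSDS φ c)
    (a : E → ℝ → ℝ) (ha : IsAdditiveFunctional φ c a)
    (Xa : E → ℝ)
    (hXa : ∀ y : E, (∃ d : ℝ, HasDerivWithinAt (a y) d (Set.Ici (0 : ℝ)) 0) →
      HasDerivWithinAt (a y) (Xa y) (Set.Ici (0 : ℝ)) 0)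
    (hXa0 : ∀ y : E, ¬ (∃ d : ℝ, HasDerivWithinAt (a y) d (Set.Ici (0 : ℝ)) 0) →
      Xa y = 0)
    (x : E) (g : ℝ → ℝ)
    (hg : ∀ t : ℝ, 0 ≤ t → (t : EReal) < c x → IntervalIntegrable g volume 0 t)
    (hag : ∀ t : ℝ, 0 ≤ t → (t : EReal) < c x → a x t = ∫ s in (0 : ℝ)..t, g s) :
    ∀ t : ℝ, 0 ≤ t → (t : EReal) < c x →
      a x t = ∫ s in (0 : ℝ)..t, Xa (φ s x) := by
  clear hSDS
  unfold IsAdditiveFunctional at ha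
  obtain ⟨-, -, ha0, haadd⟩ := ha
  intro t ht htc
  obtain ⟨z, hz1, hz2⟩ := exists_between htc
  have hzbot : z ≠ ⊥ := fun hb => by simp [hb] at hz1
  have hztop : z ≠ ⊤ := fun htp => (htp ▸ hz2).ne_top rfl
  set t' : ℝ := z.toReal with ht'def
  have hzz : (t' : EReal) = z := EReal.coe_toReal hztop hzbot
  have htt' : t < t' := by
    rw [← EReal.coe_lt_coe_iff, hzz]; exact hz1
  have ht'c : (t' : EReal) < c x := by rw [hzz]; exact hz2
  have ht'0 : (0:ℝ) ≤ t' := le_trans ht htt'.le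
  set h : ℝ → ℝ := (Set.Ioc (0:ℝ) t').indicator g with hdef
  have hgint : IntegrableOn g (Set.Ioc 0 t') volume := by
    have := hg t' ht'0 ht'c
    rwa [intervalIntegrable_iff_integrableOn_Ioc_of_le ht'0] at this
  have hhint : Integrable h volume := hgint.integrable_indicator measurableSet_Ioc
  set F : ℝ → ℝ := fun u => ∫ y in (0:ℝ)..u, h y with hFdef
  have hFeq : ∀ u : ℝ, 0 ≤ u → u ≤ t' → F u = ∫ y in (0:ℝ)..u, g y := by
    intro u hu0 hut'
    apply intervalIntegral.integral_congr_ae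
    apply Filter.Eventually.of_forall
    intro y hy
    rw [Set.uIoc_of_le hu0] at hy
    exact Set.indicator_of_mem (show y ∈ Set.Ioc (0:ℝ) t' from ⟨hy.1, le_trans hy.2 hut'⟩) g
  have haF : ∀ u : ℝ, 0 ≤ u → u ≤ t' → a x u = F u := by
    intro u hu0 hut'
    have hucx : (u : EReal) < c x :=
      lt_of_le_of_lt (EReal.coe_le_coe_iff.2 hut') ht'c
    rw [hag u hu0 hucx, hFeq u hu0 hut']
  have hae : ∀ᵐ s : ℝ, s ∈ Set.uIoc 0 t → Xa (φ s x) = g s := by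
    filter_upwards [aux_ae_hasDerivAt h hhint] with s hds hsmem
    rw [Set.uIoc_of_le ht] at hsmem
    have hs0 : (0:ℝ) ≤ s := hsmem.1.le
    have hst' : s < t' := lt_of_le_of_lt hsmem.2 htt'
    have heq : ∀ᶠ u in 𝓝[Set.Ici (0:ℝ)] 0, a (φ s x) u = F (s + u) - F s := by
      have hmem : Set.Ico (0:ℝ) (t' - s) ∈ 𝓝[Set.Ici (0:ℝ)] 0 :=
        Ico_mem_nhdsGE (by linarith)
      filter_upwards [hmem] with u hu
      have hu0 : (0:ℝ) ≤ u := hu.1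
      have hsu : s + u ≤ t' := by linarith [hu.2]
      have hcxsu : ((s + u : ℝ) : EReal) < c x :=
        lt_of_le_of_lt (EReal.coe_le_coe_iff.2 hsu) ht'c
      have hadd := haadd x s u hs0 hu0 hcxsu
      have h1 := haF (s + u) (by linarith) hsu
      have h2 := haF s hs0 hst'.le
      linarith
    have hd : HasDerivWithinAt (a (φ s x)) (h s) (Set.Ici (0:ℝ)) 0 := by
      have hshift : HasDerivAt (fun u : ℝ => F (s + u)) (h s) 0 := by
        have hf : HasDerivAt (fun u : ℝ => s + u) 1 0 := by
          simpa using (hasDerivAt_id (0:ℝ)).const_add s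
        have hG : HasDerivAt F (h s) (s + 0) := by simpa using hds
        simpa [Function.comp_def] using HasDerivAt.comp 0 hG hf
      have h1 : HasDerivAt (fun u : ℝ => F (s + u) - F s) (h s) 0 := hshift.sub_const (F s)
      refine (h1.hasDerivWithinAt).congr_of_eventuallyEq heq ?_
      simp [ha0]
    have hXaeq : Xa (φ s x) = h s := by
      have hu := hXa (φ s x) ⟨h s, hd⟩
      have e1 : derivWithin (a (φ s x)) (Set.Ici (0:ℝ)) 0 = Xa (φ s x) :=
        hu.derivWithin (uniqueDiffOn_Ici (0:ℝ) 0 Set.self_mem_Ici)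
      have e2 : derivWithin (a (φ s x)) (Set.Ici (0:ℝ)) 0 = h s :=
        hd.derivWithin (uniqueDiffOn_Ici (0:ℝ) 0 Set.self_mem_Ici)
      rw [← e1, e2]
    rw [hXaeq, hdef]
    exact Set.indicator_of_mem (show s ∈ Set.Ioc (0:ℝ) t' from ⟨hsmem.1, hst'.le⟩) g
  rw [hag t ht htc]
  exact (intervalIntegral.integral_congr_ae hae).symm
end

section
/- Let a be an additive functional of an SDS φ. Let x₁, x₂ ∈ E and t₁, t₂ with 0 < t₁ < c(x₁) and 0 < t₂ < c(x₂), and suppose there exists t₀ ∈ (0, min(t₁, t₂)) such that z := φ(t₁ − t₀, x₁) = φ(t₂ − t₀, x₂). If the left limit a(z, t₀−) := lim_{u↑t₀} a(z, u) exists, then the left limits a(x₁, t₁−) and a(x₂, t₂−) exist and a(x₁, t₁) − a(x₁, t₁−) = a(x₂, t₂) − a(x₂, t₂−). -/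
open MeasureTheory Filter Topology

theorem stmt_8 {E : Type*} [MeasurableSpace E]
    (φ : ℝ → E → E) (c : E → EReal) (hSDS : IsSDS φ c)
    (a : E → ℝ → ℝ) (ha : IsAdditiveFunctional φ c a)
    (x₁ x₂ : E) (t₁ t₂ : ℝ)
    (ht₁ : 0 < t₁) (ht₁c : (t₁ : EReal) < c x₁)
    (ht₂ : 0 < t₂) (ht₂c : (t₂ : EReal) < c x₂)
    (t₀ : ℝ) (ht₀ : 0 < t₀) (ht₀' : t₀ < min t₁ t₂)
    (hmeet : φ (t₁ - t₀) x₁ = φ (t₂ - t₀) x₂)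
    (hlim : ∃ L : ℝ, Tendsto (a (φ (t₁ - t₀) x₁)) (𝓝[<] t₀) (𝓝 L)) :
    ∃ L₁ L₂ : ℝ, Tendsto (a x₁) (𝓝[<] t₁) (𝓝 L₁) ∧
      Tendsto (a x₂) (𝓝[<] t₂) (𝓝 L₂) ∧
      a x₁ t₁ - L₁ = a x₂ t₂ - L₂ := by
  obtain ⟨_, _, _, ha_add⟩ := ha
  obtain ⟨L, hL⟩ := hlim
  set z := φ (t₁ - t₀) x₁ with hz_def
  have key : ∀ (x : E) (t : ℝ), 0 < t → (t : EReal) < c x → t₀ < t →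
      φ (t - t₀) x = z →
      Tendsto (a x) (𝓝[<] t) (𝓝 (a x (t - t₀) + L)) ∧
      a x t - (a x (t - t₀) + L) = a z t₀ - L := by
    intro x t ht htc ht0t hz
    have hst : (0:ℝ) ≤ t - t₀ := by linarith
    have h1 : Tendsto (fun u : ℝ => u - (t - t₀)) (𝓝[<] t) (𝓝[<] t₀) := by
      refine tendsto_nhdsWithin_of_tendsto_nhds_of_eventually_within _ ?_ ?_
      · have : Tendsto (fun u : ℝ => u - (t - t₀)) (𝓝 t) (𝓝 (t - (t - t₀))) :=
          tendsto_id.sub_const _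
        rw [show t - (t - t₀) = t₀ by ring] at this
        exact this.mono_left nhdsWithin_le_nhds
      · filter_upwards [self_mem_nhdsWithin] with u hu
        have : u < t := hu
        simp only [Set.mem_Iio]
        linarith
    have htend : Tendsto (fun u : ℝ => a x (t - t₀) + a z (u - (t - t₀))) (𝓝[<] t)
        (𝓝 (a x (t - t₀) + L)) := tendsto_const_nhds.add (hL.comp h1)
    have heq : ∀ᶠ u in 𝓝[<] t, a x (t - t₀) + a z (u - (t - t₀)) = a x u := by
      filter_upwards [Ioo_mem_nhdsLT_of_mem (show t ∈ Set.Ioc (t - t₀) t from ⟨by linarith, le_rfl⟩)]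
        with u hu
      have h0 : (0:ℝ) ≤ u - (t - t₀) := by linarith [hu.1]
      have hcu : ((t - t₀ + (u - (t - t₀)) : ℝ) : EReal) < c x := by
        rw [show t - t₀ + (u - (t - t₀)) = u by ring]
        exact lt_trans (by exact_mod_cast hu.2) htc
      have := ha_add x (t - t₀) (u - (t - t₀)) hst h0 hcu
      rw [hz] at this
      rw [show t - t₀ + (u - (t - t₀)) = u by ring] at this
      exact this
    refine ⟨htend.congr' heq, ?_⟩
    have hct : ((t - t₀ + t₀ : ℝ) : EReal) < c x := by
      rw [show t - t₀ + t₀ = t by ring]; exact htc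
    have hat := ha_add x (t - t₀) t₀ hst ht₀.le hct
    rw [hz, show t - t₀ + t₀ = t by ring] at hat
    rw [← hat]; ring
  have h01 : t₀ < t₁ := lt_of_lt_of_le ht₀' (min_le_left _ _)
  have h02 : t₀ < t₂ := lt_of_lt_of_le ht₀' (min_le_right _ _)
  obtain ⟨hT1, hE1⟩ := key x₁ t₁ ht₁ ht₁c h01 rfl
  obtain ⟨hT2, hE2⟩ := key x₂ t₂ ht₂ ht₂c h02 hmeet.symm
  exact ⟨_, _, hT1, hT2, by rw [hE1, hE2]⟩
end

section
/- Let φ be an SDS on E with killing time c and let g : E → ℝ be a measurable function which is locally absolutely path-summable, i.e. for every x ∈ E and t < c(x), the family (g(φ(s, x)))_{s ∈ (0,t]} is (absolutely) summable. Define a(x, t) := ∑'_{s ∈ (0,t]} g(φ(s, x)) (the tsum over the subtype (0,t]) for x ∈ E and t < c(x). Then a(x, 0) = 0 and a(x, s) + a(φ(s, x), t) = a(x, s + t) whenever s + t < c(x). -/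
open MeasureTheory Filter Topology

theorem stmt_11 {E : Type*} [MeasurableSpace E]
    (φ : ℝ → E → E) (c : E → EReal) (hSDS : IsSDS φ c)
    (g : E → ℝ) (hgmeas : Measurable g)
    (hgsum : ∀ (x : E) (t : ℝ), 0 ≤ t → (t : EReal) < c x →
      Summable (fun s : Set.Ioc (0 : ℝ) t => g (φ s.1 x)))
    (a : E → ℝ → ℝ)
    (hadef : ∀ (x : E) (t : ℝ), a x t = ∑' s : Set.Ioc (0 : ℝ) t, g (φ s.1 x)) :
    (∀ x, a x 0 = 0) ∧
    (∀ (x : E) (s t : ℝ), 0 ≤ s → 0 ≤ t → ((s + t : ℝ) : EReal) < c x →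
      a x s + a (φ s x) t = a x (s + t)) := by
  constructor
  · intro x
    rw [hadef, Set.Ioc_self]
    exact tsum_empty
  · intro x s t hs ht h
    have hsc : (s : EReal) < c x := lt_of_le_of_lt (by exact_mod_cast (by linarith : s ≤ s + t)) h
    -- flow property on Ioc 0 t
    have flow : ∀ u : Set.Ioc (0 : ℝ) t, φ u.1 (φ s x) = φ (s + u.1) x := by
      rintro ⟨u, hu1, hu2⟩
      exact hSDS.2.2.2.1 x s u hs (le_of_lt hu1)
        (lt_of_le_of_lt (by exact_mod_cast (by linarith : s + u ≤ s + t)) h)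
    -- equiv shifting Ioc 0 t to Ioc s (s+t)
    let e : Set.Ioc (0 : ℝ) t ≃ Set.Ioc s (s + t) :=
      { toFun := fun u => ⟨s + u.1, ⟨by linarith [u.2.1], by linarith [u.2.2]⟩⟩
        invFun := fun v => ⟨v.1 - s, ⟨by linarith [v.2.1], by linarith [v.2.2]⟩⟩
        left_inv := fun u => by ext; simp
        right_inv := fun v => by ext; simp }
    have h2 : ∑' u : Set.Ioc (0 : ℝ) t, g (φ u.1 (φ s x))
        = ∑' v : Set.Ioc s (s + t), g (φ v.1 x) := by
      rw [tsum_congr (fun u => by rw [flow u])]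
      exact e.tsum_eq (fun v : Set.Ioc s (s + t) => g (φ v.1 x))
    -- summabilities
    have S1 : Summable (fun u : Set.Ioc (0 : ℝ) s => g (φ u.1 x)) := hgsum x s hs hsc
    have S : Summable (fun v : Set.Ioc (0 : ℝ) (s + t) => g (φ v.1 x)) :=
      hgsum x (s + t) (by linarith) h
    have Sind : Summable ((Set.Ioc (0 : ℝ) (s + t)).indicator (fun v => g (φ v x))) :=
      summable_subtype_iff_indicator.mp S
    have S2 : Summable (fun v : Set.Ioc s (s + t) => g (φ v.1 x)) := by
      refine (Sind.subtype (Set.Ioc s (s + t))).congr ?_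
      intro v
      exact Set.indicator_of_mem (Set.mem_Ioc.mpr
        ⟨lt_of_le_of_lt hs v.2.1, v.2.2⟩) _
    -- combine
    have hunion : Set.Ioc (0 : ℝ) s ∪ Set.Ioc s (s + t) = Set.Ioc (0 : ℝ) (s + t) :=
      Set.Ioc_union_Ioc_eq_Ioc hs (by linarith)
    have hdisj : Disjoint (Set.Ioc (0 : ℝ) s) (Set.Ioc s (s + t)) :=
      Set.Ioc_disjoint_Ioc_of_le le_rfl
    rw [hadef x s, hadef (φ s x) t, hadef x (s + t), h2, ← hunion]
    exact (Summable.tsum_union_disjoint (f := fun v => g (φ v x)) hdisj S1 S2).symm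
end

section
/- Let φ be an SDS on E with killing time c, and let a : E × [0,∞) → ℝ be an additive functional of φ such that for every x ∈ E the function a(x,·) is nondecreasing and right-continuous on all of [0,∞); let μ_x denote the Lebesgue–Stieltjes measure of a(x,·), so μ_x((u, v]) = a(x, v) − a(x, u) for u ≤ v. Let g : E → ℝ be measurable such that for every x ∈ E and t < c(x), s ↦ g(φ(s, x)) is μ_x-integrable on (0, t]. Define a*(x, t) := ∫_{(0,t]} g(φ(s, x)) dμ_x(s). Then a*(x, 0) = 0 and a*(x, s) + a*(φ(s, x), t) = a*(x, s + t) whenever s + t < c(x). -/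
open MeasureTheory Filter Topology

theorem stmt_12 {E : Type*} [MeasurableSpace E]
    (φ : ℝ → E → E) (c : E → EReal) (hSDS : IsSDS φ c)
    (a : E → ℝ → ℝ) (ha : IsAdditiveFunctional φ c a)
    (hmono : ∀ x : E, MonotoneOn (a x) (Set.Ici 0))
    (hrc : ∀ (x : E) (t : ℝ), 0 ≤ t → ContinuousWithinAt (a x) (Set.Ici t) t)
    (μ : E → Measure ℝ)
    (hμ : ∀ (x : E) (u v : ℝ), 0 ≤ u → u ≤ v →
      μ x (Set.Ioc u v) = ENNReal.ofReal (a x v - a x u))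
    (g : E → ℝ) (hgmeas : Measurable g)
    (hgint : ∀ (x : E) (t : ℝ), 0 ≤ t → (t : EReal) < c x →
      IntegrableOn (fun s => g (φ s x)) (Set.Ioc 0 t) (μ x))
    (astar : E → ℝ → ℝ)
    (hastar : ∀ (x : E) (t : ℝ),
      astar x t = ∫ s in Set.Ioc (0 : ℝ) t, g (φ s x) ∂(μ x)) :
    (∀ x, astar x 0 = 0) ∧
    (∀ (x : E) (s t : ℝ), 0 ≤ s → 0 ≤ t → ((s + t : ℝ) : EReal) < c x →
      astar x s + astar (φ s x) t = astar x (s + t)) := by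
  constructor
  · intro x
    rw [hastar, Set.Ioc_self, Measure.restrict_empty, integral_zero_measure]
  · intro x s t hs ht hst
    set y := φ s x with hy
    -- basic inequalities
    have hst' : (s : EReal) < c x :=
      lt_of_le_of_lt (by exact_mod_cast (by linarith : s ≤ s + t)) hst
    -- additivity transported
    have hAdd : ∀ r : ℝ, 0 ≤ r → ((s + r : ℝ) : EReal) < c x →
        a y r = a x (s + r) - a x s := by
      intro r hr h
      have := ha.2.2.2 x s r hs hr h
      linarith
    have hflow : ∀ r : ℝ, 0 ≤ r → ((s + r : ℝ) : EReal) < c x →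
        φ r y = φ (s + r) x := fun r hr h => hSDS.2.2.2.1 x s r hs hr h
    -- key measure identity
    have hmap : (μ x).restrict (Set.Ioc s (s + t)) =
        Measure.map (fun r => s + r) ((μ y).restrict (Set.Ioc 0 t)) := by
      haveI : IsFiniteMeasure ((μ x).restrict (Set.Ioc s (s + t))) := by
        constructor
        rw [Measure.restrict_apply_univ, hμ x s (s + t) hs (by linarith)]
        exact ENNReal.ofReal_lt_top
      have hone : ∀ u v : ℝ, u < v →
          ((μ x).restrict (Set.Ioc s (s + t))) (Set.Ioc u v) =
          (Measure.map (fun r => s + r) ((μ y).restrict (Set.Ioc 0 t))) (Set.Ioc u v) := by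
        intro u v huv
        rw [Measure.restrict_apply measurableSet_Ioc,
          Measure.map_apply (measurable_const_add s) measurableSet_Ioc]
        have hpre : (fun r => s + r) ⁻¹' Set.Ioc u v = Set.Ioc (u - s) (v - s) := by
          ext r; simp only [Set.mem_preimage, Set.mem_Ioc]; constructor <;> intro h <;> exact ⟨by linarith [h.1], by linarith [h.2]⟩
        rw [hpre, Measure.restrict_apply measurableSet_Ioc, Set.Ioc_inter_Ioc,
          Set.Ioc_inter_Ioc]
        have e1 : (u - s) ⊔ 0 = (u ⊔ s) - s := by
          rcases le_total u s with h | h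
          · simp [sub_nonpos.mpr h, h]
          · rw [max_eq_left (by linarith), max_eq_left h]
        have e2 : (v - s) ⊓ t = (v ⊓ (s + t)) - s := by
          rcases le_total v (s + t) with h | h
          · rw [min_eq_left (by linarith), min_eq_left h]
          · rw [min_eq_right (by linarith), min_eq_right h]; ring
        rcases le_total (u ⊔ s) (v ⊓ (s + t)) with h | h
        · have h0 : (0 : ℝ) ≤ u ⊔ s := le_trans hs (le_max_right _ _)
          have hlt : ((v ⊓ (s + t) : ℝ) : EReal) < c x :=
            lt_of_le_of_lt (by exact_mod_cast min_le_right v (s + t)) hst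
          rw [hμ x _ _ h0 h, hμ y ((u - s) ⊔ 0) ((v - s) ⊓ t) (le_max_right _ _)
            (by rw [e1, e2]; linarith)]
          congr 1
          rw [e1, e2,
            hAdd ((u ⊔ s) - s) (sub_nonneg.mpr (le_max_right u s)) (by
              rw [show s + (u ⊔ s - s) = u ⊔ s by ring]
              exact lt_of_le_of_lt (by exact_mod_cast le_trans h (min_le_right _ _)) hst),
            hAdd ((v ⊓ (s + t)) - s) (by
              have : s ≤ v ⊓ (s + t) := le_trans (le_max_right u s) h
              linarith) (by
              rw [show s + (v ⊓ (s + t) - s) = v ⊓ (s + t) by ring]; exact hlt)]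
          rw [show s + (u ⊔ s - s) = u ⊔ s by ring, show s + (v ⊓ (s + t) - s) = v ⊓ (s + t) by ring]
          ring
        · rw [Set.Ioc_eq_empty (by rw [not_lt]; exact h),
            Set.Ioc_eq_empty (by rw [not_lt, e1, e2]; linarith), measure_empty, measure_empty]
      refine Measure.ext_of_Ioc_finite _ _ ?_ hone
      rw [Measure.restrict_apply_univ,
        Measure.map_apply (measurable_const_add s) MeasurableSet.univ,
        Set.preimage_univ, Measure.restrict_apply_univ,
        hμ x s (s + t) hs (by linarith), hμ y 0 t le_rfl ht, ha.2.2.1,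
        hAdd t ht hst]
      ring_nf
    -- measurability of the integrand
    have hφx : Measurable fun r : ℝ => φ r x :=
      hSDS.1.comp (measurable_id.prodMk measurable_const)
    have hgφ : Measurable fun r : ℝ => g (φ r x) := hgmeas.comp hφx
    -- integrability pieces
    have hint : IntegrableOn (fun r => g (φ r x)) (Set.Ioc 0 (s + t)) (μ x) :=
      hgint x (s + t) (by linarith) hst
    have hint1 : IntegrableOn (fun r => g (φ r x)) (Set.Ioc 0 s) (μ x) :=
      hint.mono_set (Set.Ioc_subset_Ioc le_rfl (by linarith))
    have hint2 : IntegrableOn (fun r => g (φ r x)) (Set.Ioc s (s + t)) (μ x) :=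
      hint.mono_set (Set.Ioc_subset_Ioc hs le_rfl)
    have hsplit : (∫ r in Set.Ioc 0 (s + t), g (φ r x) ∂(μ x)) =
        (∫ r in Set.Ioc 0 s, g (φ r x) ∂(μ x)) +
        (∫ r in Set.Ioc s (s + t), g (φ r x) ∂(μ x)) := by
      rw [← setIntegral_union (Set.Ioc_disjoint_Ioc_of_le le_rfl) measurableSet_Ioc hint1 hint2,
        Set.Ioc_union_Ioc_eq_Ioc hs (by linarith)]
    have hshift : (∫ r in Set.Ioc s (s + t), g (φ r x) ∂(μ x)) =
        ∫ r in Set.Ioc 0 t, g (φ r y) ∂(μ y) := by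
      have : (∫ r in Set.Ioc s (s + t), g (φ r x) ∂(μ x)) =
          ∫ r, g (φ r x) ∂((μ x).restrict (Set.Ioc s (s + t))) := rfl
      rw [this, hmap, integral_map (measurable_const_add s).aemeasurable
        hgφ.aestronglyMeasurable]
      refine setIntegral_congr_fun measurableSet_Ioc fun r hr => ?_
      rw [hflow r (le_of_lt hr.1) (lt_of_le_of_lt (by exact_mod_cast add_le_add_right hr.2 s) hst)]
    rw [hastar x s, hastar y t, hastar x (s + t), hsplit, hshift]
end

section
/- Let E be a measurable space, φ : [0,∞) × E → E measurable with φ(0,x) = x, and let F : E × [0,∞) → [0,1] be measurable with, for each x ∈ E: F(x, 0) = 1 and F(x,·) nonincreasing and right-continuous. Set c(x) := inf{t ≥ 0 : F(x,t) = 0} (with c(x) = ∞ if F(x,·) never vanishes), and assume φ(t, φ(s,x)) = φ(s+t, x) for s + t < c(x) and the multiplicative cocycle F(x, s + t) = F(x, s) · F(φ(s, x), t) for all x ∈ E, 0 ≤ s < c(x) and t ≥ 0. For each x let ν_x be the Lebesgue–Stieltjes measure of the nondecreasing right-continuous function t ↦ 1 − F(x, t), and define the conditional hazard function Λ(x, t)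 := ∫_{(0,t]} F(x, s−)⁻¹ dν_x(s), where F(x, s−) denotes the left limit of F(x,·) at s. Then Λ(x, 0) = 0 and Λ(x, s + t) = Λ(x, s) + Λ(φ(s, x), t) whenever s + t < c(x). -/
open MeasureTheory Filter Topology

theorem stmt_13 {E : Type*} [MeasurableSpace E]
    (φ : ℝ → E → E) (hφmeas : Measurable (fun p : ℝ × E => φ p.1 p.2))
    (hφ0 : ∀ x, φ 0 x = x)
    (F : E → ℝ → ℝ) (hFmeas : Measurable (fun p : E × ℝ => F p.1 p.2))
    (hF01 : ∀ (x : E) (t : ℝ), 0 ≤ F x t ∧ F x t ≤ 1)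
    (hF0 : ∀ x, F x 0 = 1)
    (hFanti : ∀ x : E, AntitoneOn (F x) (Set.Ici 0))
    (hFrc : ∀ (x : E) (t : ℝ), 0 ≤ t → ContinuousWithinAt (F x) (Set.Ici t) t)
    (c : E → EReal)
    (hc : ∀ x : E, c x = sInf {v : EReal | ∃ u : ℝ, 0 ≤ u ∧ v = (u : EReal) ∧ F x u = 0})
    (hφadd : ∀ (x : E) (s t : ℝ), 0 ≤ s → 0 ≤ t → ((s + t : ℝ) : EReal) < c x →
      φ t (φ s x) = φ (s + t) x)
    (hFmul : ∀ (x : E) (s t : ℝ), 0 ≤ s → (s : EReal) < c x → 0 ≤ t →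
      F x (s + t) = F x s * F (φ s x) t)
    (ν : E → Measure ℝ)
    (hν : ∀ (x : E) (u v : ℝ), 0 ≤ u → u ≤ v →
      ν x (Set.Ioc u v) = ENNReal.ofReal ((1 - F x v) - (1 - F x u)))
    (Λ : E → ℝ → ℝ)
    (hΛ : ∀ (x : E) (t : ℝ),
      Λ x t = ∫ s in Set.Ioc (0 : ℝ) t, (Function.leftLim (F x) s)⁻¹ ∂(ν x)) :
    (∀ x, Λ x 0 = 0) ∧
    (∀ (x : E) (s t : ℝ), 0 ≤ s → 0 ≤ t → ((s + t : ℝ) : EReal) < c x →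
      Λ x (s + t) = Λ x s + Λ (φ s x) t) := by
  classical
  -- the globally antitone extension of `F x`
  set h : E → ℝ → ℝ := fun x u => F x (u ⊔ 0) with hh_def
  have hh_anti : ∀ x, Antitone (h x) := by
    intro x u v huv
    exact hFanti x (Set.mem_Ici.2 le_sup_right) (Set.mem_Ici.2 le_sup_right)
      (sup_le_sup_right huv 0)
  have hh_eq : ∀ (x : E) (u : ℝ), 0 ≤ u → h x u = F x u := by
    intro x u hu
    simp [hh_def, sup_eq_left.2 hu]
  have hh1 : ∀ (x : E) (u : ℝ), h x u ≤ 1 := by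
    intro x u
    have := hFanti x (Set.mem_Ici.2 le_rfl) (Set.mem_Ici.2 (le_sup_right : (0:ℝ) ≤ u ⊔ 0))
      (le_sup_right)
    simpa [hh_def, hF0 x] using this
  have hh0 : ∀ (x : E) (u : ℝ), 0 ≤ h x u := fun x u => (hF01 x _).1
  -- the Stieltjes function `1 - h x`
  have hrc : ∀ (x : E) (u : ℝ), ContinuousWithinAt (fun v => 1 - h x v) (Set.Ici u) u := by
    intro x u
    have hmax : ContinuousWithinAt (fun v : ℝ => v ⊔ 0) (Set.Ici u) u :=
      (continuous_id.max continuous_const).continuousWithinAt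
    have hmaps : Set.MapsTo (fun v : ℝ => v ⊔ 0) (Set.Ici u) (Set.Ici (u ⊔ 0)) :=
      fun v hv => Set.mem_Ici.2 (sup_le_sup_right hv 0)
    have : ContinuousWithinAt (fun v => F x (v ⊔ 0)) (Set.Ici u) u :=
      ContinuousWithinAt.comp (g := F x) (f := fun v : ℝ => v ⊔ 0)
        (hFrc x (u ⊔ 0) le_sup_right) hmax hmaps
    exact continuousWithinAt_const.sub this
  set S : E → StieltjesFunction ℝ := fun x =>
    { toFun := fun u => 1 - h x u
      mono' := fun u v huv => sub_le_sub_left (hh_anti x huv) 1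
      right_continuous' := hrc x } with hS_def
  set μ : E → Measure ℝ := fun x => (S x).measure with hμ_def
  have hμIoc : ∀ (x : E) (a b : ℝ), μ x (Set.Ioc a b) = ENNReal.ofReal (h x a - h x b) := by
    intro x a b
    rw [hμ_def, StieltjesFunction.measure_Ioc]
    congr 1
    show (1 - h x b) - (1 - h x a) = h x a - h x b
    ring
  -- restriction of `ν x` to `Ioc 0 T` agrees with `μ x`
  have hrestr : ∀ (x : E) (T : ℝ), 0 ≤ T →
      (ν x).restrict (Set.Ioc 0 T) = (μ x).restrict (Set.Ioc 0 T) := by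
    intro x T hT
    refine MeasureTheory.Measure.ext_of_Ioc' _ _ (fun a b _ => ?_) (fun a b _ => ?_)
    · rw [Measure.restrict_apply measurableSet_Ioc]
      refine ne_of_lt (lt_of_le_of_lt (measure_mono Set.inter_subset_right) ?_)
      rw [hν x 0 T le_rfl hT]
      exact ENNReal.ofReal_lt_top
    · rw [Measure.restrict_apply measurableSet_Ioc, Measure.restrict_apply measurableSet_Ioc,
        Set.Ioc_inter_Ioc]
      rcases le_total (a ⊔ 0) (b ⊓ T) with hab | hab
      · rw [hν x _ _ le_sup_right hab, hμIoc]
        congr 1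
        rw [hh_eq x _ le_sup_right, hh_eq x _ (le_trans le_sup_right hab)]
        ring
      · rw [Set.Ioc_eq_empty (by exact fun hlt => absurd hab (not_le.2 hlt)),
          measure_empty, measure_empty]
  -- identification of the left limits
  have hL_eq : ∀ (x : E) (u : ℝ), 0 < u →
      Function.leftLim (F x) u = Function.leftLim (h x) u := by
    intro x u hu
    have hne : (𝓝[<] u) ≠ ⊥ := (nhdsLT_neBot u).ne
    have hmem : Set.Ioo (0 : ℝ) u ∈ 𝓝[<] u := Ioo_mem_nhdsLT_of_mem ⟨hu, le_rfl⟩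
    have heq : h x =ᶠ[𝓝[<] u] F x :=
      Filter.eventually_of_mem hmem fun v hv => hh_eq x v hv.1.le
    have : Filter.Tendsto (F x) (𝓝[<] u) (𝓝 (Function.leftLim (h x) u)) :=
      ((hh_anti x).tendsto_leftLim u).congr' heq
    exact leftLim_eq_of_tendsto (h := ⟨hne⟩) this
  have hL_anti : ∀ x : E, Antitone (Function.leftLim (h x)) := fun x => (hh_anti x).leftLim
  -- positivity of F below the explosion time
  have hFpos : ∀ (x : E) (u : ℝ), 0 ≤ u → ((u : ℝ) : EReal) < c x → 0 < F x u := by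
    intro x u hu hlt
    rcases (hF01 x u).1.lt_or_eq with hpos | heq
    · exact hpos
    · exfalso
      have : c x ≤ ((u : ℝ) : EReal) := by
        rw [hc x]
        exact sInf_le ⟨u, hu, rfl, heq.symm⟩
      exact absurd hlt (not_lt.2 this)
  -- integrability
  have hInt : ∀ (x : E) (T : ℝ) (A : Set ℝ), MeasurableSet A → A ⊆ Set.Ioc 0 T →
      0 < F x T → IntegrableOn (fun u => (Function.leftLim (h x) u)⁻¹) A (μ x) := by
    intro x T A hA hAsub hFT
    rcases (Set.eq_empty_or_nonempty A) with rfl | ⟨a, ha⟩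
    · simp [IntegrableOn]
    have hTnn : (0 : ℝ) ≤ T := (hAsub ha).1.le.trans (hAsub ha).2
    have hbound : ∀ u ∈ A, F x T ≤ Function.leftLim (h x) u := by
      intro u hu
      have hu' := hAsub hu
      calc F x T ≤ F x u := hFanti x (Set.mem_Ici.2 hu'.1.le) (Set.mem_Ici.2 hTnn) hu'.2
        _ = h x u := (hh_eq x u hu'.1.le).symm
        _ ≤ Function.leftLim (h x) u := (hh_anti x).le_leftLim le_rfl
    refine Measure.integrableOn_of_bounded (M := (F x T)⁻¹) ?_ ?_ ?_
    · refine ne_of_lt (lt_of_le_of_lt (measure_mono hAsub) ?_)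
      rw [hμIoc]
      exact ENNReal.ofReal_lt_top
    · exact ((hL_anti x).measurable.inv).aestronglyMeasurable
    · refine (ae_restrict_iff' hA).2 (Filter.Eventually.of_forall fun u hu => ?_)
      have h1 := hbound u hu
      have h2 : 0 < Function.leftLim (h x) u := lt_of_lt_of_le hFT h1
      rw [Real.norm_eq_abs, abs_of_pos (inv_pos.2 h2)]
      exact inv_anti₀ hFT h1
  -- rewriting of Λ
  have hΛ' : ∀ (x : E) (T : ℝ), 0 ≤ T →
      Λ x T = ∫ u in Set.Ioc (0:ℝ) T, (Function.leftLim (h x) u)⁻¹ ∂(μ x) := by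
    intro x T hT
    rw [hΛ]
    calc ∫ u in Set.Ioc (0:ℝ) T, (Function.leftLim (F x) u)⁻¹ ∂(ν x)
        = ∫ u in Set.Ioc (0:ℝ) T, (Function.leftLim (F x) u)⁻¹ ∂(μ x) := by
          rw [show (∫ u in Set.Ioc (0:ℝ) T, (Function.leftLim (F x) u)⁻¹ ∂(ν x))
            = ∫ u, (Function.leftLim (F x) u)⁻¹ ∂((ν x).restrict (Set.Ioc 0 T)) from rfl,
            hrestr x T hT]
      _ = ∫ u in Set.Ioc (0:ℝ) T, (Function.leftLim (h x) u)⁻¹ ∂(μ x) :=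
          setIntegral_congr_fun measurableSet_Ioc fun u hu => by rw [hL_eq x u hu.1]
  constructor
  · intro x
    rw [hΛ, Set.Ioc_self, Measure.restrict_empty, integral_zero_measure]
  · intro x s t hs ht hlt
    set y := φ s x with hy
    have hcoe : ∀ {u v : ℝ}, u ≤ v → ((u:ℝ):EReal) ≤ ((v:ℝ):EReal) := by
      intro u v huv; exact_mod_cast huv
    have hsc : ((s : ℝ) : EReal) < c x := lt_of_le_of_lt (hcoe (le_add_of_nonneg_right ht)) hlt
    have hFxs : 0 < F x s := hFpos x s hs hsc
    have hFyt : 0 < F y t := by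
      have hst : 0 < F x (s + t) := hFpos x (s+t) (add_nonneg hs ht) hlt
      have := hFmul x s t hs hsc ht
      nlinarith [ (hF01 y t).1 ]
    -- the key shift identity for left limits
    have hshift : ∀ u : ℝ, 0 < u →
        Function.leftLim (h x) (u + s) = F x s * Function.leftLim (h y) u := by
      intro u hu
      have hne : (𝓝[<] (u + s)) ≠ ⊥ := (nhdsLT_neBot _).ne
      have hsub : Filter.Tendsto (fun v : ℝ => v - s) (𝓝[<] (u + s)) (𝓝[<] u) := by
        apply tendsto_nhdsWithin_of_tendsto_nhds_of_eventually_within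
        · have : Filter.Tendsto (fun v : ℝ => v - s) (𝓝 (u + s)) (𝓝 (u + s - s)) :=
            (continuous_id.sub continuous_const).tendsto _
          simpa using this.mono_left nhdsWithin_le_nhds
        · exact eventually_mem_nhdsWithin.mono fun v hv => by
            simp only [Set.mem_Iio] at hv ⊢; linarith
      have htend : Filter.Tendsto (fun v : ℝ => F x s * h y (v - s)) (𝓝[<] (u + s))
          (𝓝 (F x s * Function.leftLim (h y) u)) :=
        (((hh_anti y).tendsto_leftLim u).comp hsub).const_mul (F x s)
      have hmem : Set.Ioo s (u + s) ∈ 𝓝[<] (u + s) :=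
        Ioo_mem_nhdsLT_of_mem ⟨by linarith, le_rfl⟩
      have heq : (fun v : ℝ => F x s * h y (v - s)) =ᶠ[𝓝[<] (u + s)] h x := by
        refine Filter.eventually_of_mem hmem fun v hv => ?_
        have hv1 : s < v := hv.1
        show F x s * h y (v - s) = h x v
        have : F x v = F x s * F y (v - s) := by
          have := hFmul x s (v - s) hs hsc (by linarith)
          simpa [add_sub_cancel] using this
        rw [hh_eq y (v - s) (by linarith), hh_eq x v (by linarith)]
        exact this.symm
      exact leftLim_eq_of_tendsto (h := ⟨hne⟩) (htend.congr' heq)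
    -- the measure identity
    have hmap : (μ x).restrict (Set.Ioc s (s + t)) =
        (ENNReal.ofReal (F x s)) •
          Measure.map (fun u : ℝ => u + s) ((μ y).restrict (Set.Ioc 0 t)) := by
      refine MeasureTheory.Measure.ext_of_Ioc' _ _ (fun a b _ => ?_) (fun a b _ => ?_)
      · rw [Measure.restrict_apply measurableSet_Ioc]
        refine ne_of_lt (lt_of_le_of_lt (measure_mono Set.inter_subset_right) ?_)
        rw [hμIoc]
        exact ENNReal.ofReal_lt_top
      · rw [Measure.restrict_apply measurableSet_Ioc, Set.Ioc_inter_Ioc, hμIoc,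
          Measure.smul_apply, Measure.map_apply (measurable_add_const s) measurableSet_Ioc,
          Set.preimage_add_const_Ioc, Measure.restrict_apply measurableSet_Ioc,
          Set.Ioc_inter_Ioc, hμIoc, smul_eq_mul, ← ENNReal.ofReal_mul (hF01 x s).1]
        have hA : (0:ℝ) ≤ (a - s) ⊔ 0 := le_sup_right
        have hB : (0:ℝ) ≤ ((b - s) ⊓ t) ⊔ 0 := le_sup_right
        have e1 : h y ((a - s) ⊔ 0) = F y ((a - s) ⊔ 0) := hh_eq y _ hA
        have e2 : h y ((b - s) ⊓ t) = F y (((b - s) ⊓ t) ⊔ 0) := rfl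
        have m1 : F x (s + ((a - s) ⊔ 0)) = F x s * F y ((a - s) ⊔ 0) :=
          hFmul x s _ hs hsc hA
        have m2 : F x (s + (((b - s) ⊓ t) ⊔ 0)) = F x s * F y (((b - s) ⊓ t) ⊔ 0) :=
          hFmul x s _ hs hsc hB
        have s1 : s + ((a - s) ⊔ 0) = a ⊔ s := by
          rcases le_total a s with hc' | hc'
          · rw [sup_eq_right.2 (by linarith : a - s ≤ 0), sup_eq_right.2 hc']; ring
          · rw [sup_eq_left.2 (by linarith : (0:ℝ) ≤ a - s), sup_eq_left.2 hc']; ring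
        have s2 : s + ((((b - s) ⊓ t)) ⊔ 0) = (b ⊓ (s + t)) ⊔ s := by
          rcases le_total b (s + t) with hb' | hb'
          · rw [inf_eq_left.2 (by linarith : b - s ≤ t), inf_eq_left.2 hb']
            rcases le_total b s with hbs | hbs
            · rw [sup_eq_right.2 (by linarith : b - s ≤ 0), sup_eq_right.2 hbs]; ring
            · rw [sup_eq_left.2 (by linarith : (0:ℝ) ≤ b - s), sup_eq_left.2 hbs]; ring
          · rw [inf_eq_right.2 (by linarith : t ≤ b - s), inf_eq_right.2 hb',
              sup_eq_left.2 ht, sup_eq_left.2 (by linarith : s ≤ s + t)]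
        -- now reduce to a comparison of F-values
        rw [e1, e2, mul_sub, ← m1, ← m2, s1, s2]
        have hax : h x (a ⊔ s) = F x (a ⊔ s) := hh_eq x _ (le_trans hs le_sup_right)
        rw [hax]
        rcases le_total s (b ⊓ (s + t)) with hw | hw
        · rw [sup_eq_left.2 hw, hh_eq x _ (le_trans hs hw)]
        · -- both sides are ofReal of nonpositive numbers
          have h1 : F x (a ⊔ s) - h x (b ⊓ (s + t)) ≤ 0 := by
            have : h x (b ⊓ (s+t)) = F x ((b ⊓ (s+t)) ⊔ 0) := rfl
            rw [this]
            have : F x (a ⊔ s) ≤ F x ((b ⊓ (s+t)) ⊔ 0) := by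
              apply hFanti x (Set.mem_Ici.2 le_sup_right) (Set.mem_Ici.2 (le_trans hs le_sup_right))
              exact sup_le (le_trans hw le_sup_right) (le_trans hs le_sup_right)
            linarith
          have h2 : F x (a ⊔ s) - F x (b ⊓ (s + t) ⊔ s) ≤ 0 := by
            rw [sup_eq_right.2 hw]
            have : F x (a ⊔ s) ≤ F x s :=
              hFanti x (Set.mem_Ici.2 hs) (Set.mem_Ici.2 (le_trans hs le_sup_right)) le_sup_right
            linarith
          rw [ENNReal.ofReal_of_nonpos h2, ENNReal.ofReal_of_nonpos h1]
    -- integrability facts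
    have hFst : 0 < F x (s + t) := hFpos x (s+t) (add_nonneg hs ht) hlt
    have hInt1 : IntegrableOn (fun u => (Function.leftLim (h x) u)⁻¹) (Set.Ioc 0 s) (μ x) :=
      hInt x (s+t) _ measurableSet_Ioc
        (Set.Ioc_subset_Ioc le_rfl (le_add_of_nonneg_right ht)) hFst
    have hInt2 : IntegrableOn (fun u => (Function.leftLim (h x) u)⁻¹) (Set.Ioc s (s+t)) (μ x) :=
      hInt x (s+t) _ measurableSet_Ioc
        (Set.Ioc_subset_Ioc hs le_rfl) hFst
    -- the change of variables
    have hmid : (∫ u in Set.Ioc s (s + t), (Function.leftLim (h x) u)⁻¹ ∂(μ x)) = Λ y t := by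
      have step1 : (∫ u in Set.Ioc s (s + t), (Function.leftLim (h x) u)⁻¹ ∂(μ x))
          = ∫ u, (Function.leftLim (h x) u)⁻¹
              ∂((ENNReal.ofReal (F x s)) •
                Measure.map (fun u : ℝ => u + s) ((μ y).restrict (Set.Ioc 0 t))) := by
        rw [show (∫ u in Set.Ioc s (s + t), (Function.leftLim (h x) u)⁻¹ ∂(μ x))
          = ∫ u, (Function.leftLim (h x) u)⁻¹ ∂((μ x).restrict (Set.Ioc s (s+t))) from rfl, hmap]
      rw [step1, integral_smul_measure,
        integral_map (f := fun u => (Function.leftLim (h x) u)⁻¹) (measurable_add_const s).aemeasurable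
          ((hL_anti x).measurable.inv).aestronglyMeasurable]
      have step2 : (∫ u in Set.Ioc (0:ℝ) t, (Function.leftLim (h x) (u + s))⁻¹ ∂(μ y))
          = ∫ u in Set.Ioc (0:ℝ) t, (F x s)⁻¹ * (Function.leftLim (h y) u)⁻¹ ∂(μ y) := by
        refine setIntegral_congr_fun measurableSet_Ioc fun u hu => ?_
        rw [hshift u hu.1, mul_inv]
      rw [step2, integral_const_mul, ENNReal.toReal_ofReal (hF01 x s).1, smul_eq_mul,
        ← mul_assoc, mul_inv_cancel₀ (ne_of_gt hFxs), one_mul, ← hΛ' y t ht]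
    -- put everything together
    rw [hΛ' x (s+t) (add_nonneg hs ht), hΛ' x s hs,
      ← Set.Ioc_union_Ioc_eq_Ioc hs (le_add_of_nonneg_right ht),
      setIntegral_union (Set.Ioc_disjoint_Ioc_of_le le_rfl) measurableSet_Ioc hInt1 hInt2, hmid]
end

section
/- Let φ be an SDS on E with killing time c, and let Λ : E × [0,∞) → ℝ be an additive functional of φ such that for each x ∈ E the function Λ(x,·) is nondecreasing. For 0 < s < c(x), write ΔΛ(x, s) := Λ(x, s) − Λ(x, s−), where Λ(x, s−) is the left limit. Assume that for each x ∈ E and t < c(x) the family (ΔΛ(x, s))_{s ∈ (0,t]} is summable and the family (1 − ΔΛ(x, s))_{s ∈ (0,t]} is multipliable. Define the Stieltjes exponential F(x, t) := exp(−(Λ(x, t) − ∑'_{s ∈ (0,t]} ΔΛ(x, s))) · ∏'_{s ∈ (0,t]} (1 − ΔΛ(x, s)) for t < c(x). Then F(x, 0) = 1 and F(x, s + t) = F(x, s) · F(φ(s, x), t) whenever s + t < c(x). -/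
open MeasureTheory Filter Topology

theorem stmt_14 {E : Type*} [MeasurableSpace E]
    (φ : ℝ → E → E) (c : E → EReal) (hSDS : IsSDS φ c)
    (Λ : E → ℝ → ℝ) (hΛ : IsAdditiveFunctional φ c Λ)
    (hmono : ∀ x : E, MonotoneOn (Λ x) (Set.Ici 0))
    (hsum : ∀ (x : E) (t : ℝ), 0 ≤ t → (t : EReal) < c x →
      Summable (fun s : Set.Ioc (0 : ℝ) t => Λ x s.1 - Function.leftLim (Λ x) s.1))
    (hprod : ∀ (x : E) (t : ℝ), 0 ≤ t → (t : EReal) < c x →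
      Multipliable (fun s : Set.Ioc (0 : ℝ) t => 1 - (Λ x s.1 - Function.leftLim (Λ x) s.1)))
    (F : E → ℝ → ℝ)
    (hF : ∀ (x : E) (t : ℝ),
      F x t = Real.exp (-(Λ x t - ∑' s : Set.Ioc (0 : ℝ) t, (Λ x s.1 - Function.leftLim (Λ x) s.1)))
        * ∏' s : Set.Ioc (0 : ℝ) t, (1 - (Λ x s.1 - Function.leftLim (Λ x) s.1))) :
    (∀ x, F x 0 = 1) ∧
    (∀ (x : E) (s t : ℝ), 0 ≤ s → 0 ≤ t → ((s + t : ℝ) : EReal) < c x →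
      F x (s + t) = F x s * F (φ s x) t) := by
  obtain ⟨-, -, hΛ0, hΛadd⟩ := hΛ
  -- key: jumps of Λ (φ s x) at u equal jumps of Λ x at s + u
  have key : ∀ (x : E) (s u : ℝ), 0 ≤ s → 0 < u → ((s + u : ℝ) : EReal) < c x →
      Λ (φ s x) u - Function.leftLim (Λ (φ s x)) u
        = Λ x (s + u) - Function.leftLim (Λ x) (s + u) := by
    intro x s u hs hu hlt
    have ha0 : 0 < s + u := add_pos_of_nonneg_of_pos hs hu
    have hML : Filter.Tendsto (Λ x) (𝓝[<] (s + u))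
        (𝓝 (sSup (Λ x '' Set.Ioo 0 (s + u)))) := by
      refine MonotoneOn.tendsto_nhdsWithin_Ioo_left ⟨(s + u) / 2, by constructor <;> linarith⟩
        ((hmono x).mono (fun v hv => le_of_lt hv.1)) ?_
      refine ⟨Λ x (s + u), ?_⟩
      rintro _ ⟨v, hv, rfl⟩
      exact hmono x hv.1.le ha0.le hv.2.le
    have hLx : Function.leftLim (Λ x) (s + u) = sSup (Λ x '' Set.Ioo 0 (s + u)) :=
      leftLim_eq_of_tendsto hML
    have hmap : Filter.Tendsto (fun v : ℝ => s + v) (𝓝[<] u) (𝓝[<] (s + u)) := by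
      rw [tendsto_nhdsWithin_iff]
      constructor
      · exact ((continuous_const.add continuous_id).tendsto u).mono_left nhdsWithin_le_nhds
      · filter_upwards [self_mem_nhdsWithin] with v hv
        exact (add_lt_add_iff_left s).2 hv
    have heq : ∀ᶠ v in 𝓝[<] u, Λ (φ s x) v = Λ x (s + v) - Λ x s := by
      filter_upwards [Ioo_mem_nhdsLT_of_mem (by simp [hu] : u ∈ Set.Ioc 0 u)] with v hv
      have h2 : ((s + v : ℝ) : EReal) < c x :=
        lt_trans (EReal.coe_lt_coe_iff.2 (by linarith [hv.2])) hlt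
      have := hΛadd x s v hs hv.1.le h2
      linarith
    have hy : Filter.Tendsto (Λ (φ s x)) (𝓝[<] u)
        (𝓝 (sSup (Λ x '' Set.Ioo 0 (s + u)) - Λ x s)) := by
      have h3 : Filter.Tendsto (fun v => Λ x (s + v) - Λ x s) (𝓝[<] u)
          (𝓝 (sSup (Λ x '' Set.Ioo 0 (s + u)) - Λ x s)) :=
        (hML.comp hmap).sub_const (Λ x s)
      exact h3.congr' (heq.mono fun v hv => hv.symm)
    have hLy : Function.leftLim (Λ (φ s x)) u = sSup (Λ x '' Set.Ioo 0 (s + u)) - Λ x s :=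
      leftLim_eq_of_tendsto hy
    have hval : Λ x s + Λ (φ s x) u = Λ x (s + u) := hΛadd x s u hs hu.le hlt
    rw [hLx, hLy]; linarith
  constructor
  · intro x
    rw [hF]
    simp [hΛ0 x, Set.Ioc_self, tsum_empty, tprod_empty]
  · intro x s t hs ht hst
    have hsc : (s : EReal) < c x :=
      lt_of_le_of_lt (EReal.coe_le_coe_iff.2 (by linarith)) hst
    have hcy : c (φ s x) = c x - (s : EReal) := hSDS.2.2.2.2 x s hs hsc
    have htc : (t : EReal) < c (φ s x) := by
      rw [hcy, EReal.lt_sub_iff_add_lt (Or.inl (EReal.coe_ne_bot s))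
        (Or.inl (EReal.coe_ne_top s)), ← EReal.coe_add, add_comm]
      exact hst
    have hval : Λ x s + Λ (φ s x) t = Λ x (s + t) := hΛadd x s t hs ht hst
    have hkey : ∀ u : Set.Ioc (0 : ℝ) t,
        Λ (φ s x) u.1 - Function.leftLim (Λ (φ s x)) u.1
          = Λ x (s + u.1) - Function.leftLim (Λ x) (s + u.1) := by
      intro u
      exact key x s u.1 hs u.2.1
        (lt_of_le_of_lt (EReal.coe_le_coe_iff.2 (by linarith [u.2.2])) hst)
    -- equivalence between (0, t] and (s, s+t]
    let e : Set.Ioc (0 : ℝ) t ≃ Set.Ioc s (s + t) :=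
      { toFun := fun u => ⟨s + u.1, by
          obtain ⟨h1, h2⟩ := u.2
          exact ⟨by linarith, by linarith⟩⟩
        invFun := fun v => ⟨v.1 - s, by
          obtain ⟨h1, h2⟩ := v.2
          exact ⟨by linarith, by linarith⟩⟩
        left_inv := fun u => by ext; simp
        right_inv := fun v => by ext; simp }
    have hIoc : Set.Ioc (0 : ℝ) s ∪ Set.Ioc s (s + t) = Set.Ioc 0 (s + t) :=
      Set.Ioc_union_Ioc_eq_Ioc hs (by linarith)
    have h1 : Summable ((fun v => Λ x v - Function.leftLim (Λ x) v)
        ∘ (Subtype.val : Set.Ioc (0 : ℝ) s → ℝ)) := hsum x s hs hsc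
    have h2' : Summable (fun u : Set.Ioc (0 : ℝ) t =>
        Λ x (s + u.1) - Function.leftLim (Λ x) (s + u.1)) :=
      (hsum (φ s x) t ht htc).congr fun u => hkey u
    have h2 : Summable ((fun v => Λ x v - Function.leftLim (Λ x) v)
        ∘ (Subtype.val : Set.Ioc s (s + t) → ℝ)) :=
      e.summable_iff.mp h2'
    have p1 : Multipliable ((fun v => 1 - (Λ x v - Function.leftLim (Λ x) v))
        ∘ (Subtype.val : Set.Ioc (0 : ℝ) s → ℝ)) := hprod x s hs hsc
    have p2' : Multipliable (fun u : Set.Ioc (0 : ℝ) t =>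
        1 - (Λ x (s + u.1) - Function.leftLim (Λ x) (s + u.1))) :=
      (hprod (φ s x) t ht htc).congr fun u => by rw [hkey u]
    have p2 : Multipliable ((fun v => 1 - (Λ x v - Function.leftLim (Λ x) v))
        ∘ (Subtype.val : Set.Ioc s (s + t) → ℝ)) :=
      e.multipliable_iff.mp p2'
    have hsum_eq : ∑' u : Set.Ioc (0 : ℝ) (s + t), (Λ x u.1 - Function.leftLim (Λ x) u.1)
        = (∑' u : Set.Ioc (0 : ℝ) s, (Λ x u.1 - Function.leftLim (Λ x) u.1))
          + ∑' u : Set.Ioc (0 : ℝ) t,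
              (Λ (φ s x) u.1 - Function.leftLim (Λ (φ s x)) u.1) := by
      rw [← hIoc, Summable.tsum_union_disjoint (Set.Ioc_disjoint_Ioc_of_le le_rfl) h1 h2]
      congr 1
      exact (e.tsum_eq (fun v : Set.Ioc s (s + t) =>
        Λ x v.1 - Function.leftLim (Λ x) v.1)).symm.trans
        (tsum_congr fun u => (hkey u).symm)
    have hprod_eq : ∏' u : Set.Ioc (0 : ℝ) (s + t),
          (1 - (Λ x u.1 - Function.leftLim (Λ x) u.1))
        = (∏' u : Set.Ioc (0 : ℝ) s, (1 - (Λ x u.1 - Function.leftLim (Λ x) u.1)))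
          * ∏' u : Set.Ioc (0 : ℝ) t,
              (1 - (Λ (φ s x) u.1 - Function.leftLim (Λ (φ s x)) u.1)) := by
      rw [← hIoc, Multipliable.tprod_union_disjoint (Set.Ioc_disjoint_Ioc_of_le le_rfl) p1 p2]
      congr 1
      exact (e.tprod_eq (fun v : Set.Ioc s (s + t) =>
        1 - (Λ x v.1 - Function.leftLim (Λ x) v.1))).symm.trans
        (tprod_congr fun u => by exact congrArg (fun z : ℝ => 1 - z) (hkey u).symm)
    rw [hF x (s + t), hF x s, hF (φ s x) t]
    have hexp : -(Λ x (s + t)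
          - ∑' u : Set.Ioc (0 : ℝ) (s + t), (Λ x u.1 - Function.leftLim (Λ x) u.1))
        = -(Λ x s - ∑' u : Set.Ioc (0 : ℝ) s, (Λ x u.1 - Function.leftLim (Λ x) u.1))
          + -(Λ (φ s x) t - ∑' u : Set.Ioc (0 : ℝ) t,
              (Λ (φ s x) u.1 - Function.leftLim (Λ (φ s x)) u.1)) := by
      rw [hsum_eq, ← hval]; ring
    rw [hexp, Real.exp_add, hprod_eq]
    ring
end

section
/- Let φ be an SDS on E with killing time c. Let Λ : E × [0,∞) → ℝ be an additive functional of φ such that for each x ∈ E the function Λ(x,·) is nondecreasing and right-continuous on all of [0,∞), and let μ_x denote its Lebesgue–Stieltjes measure, μ_x((u,v]) = Λ(x,v) − Λ(x,u). Let Q : E → Measure(E) be a measurable family of probability measures and let f : E → ℝ be measurable such that for every x ∈ E and t < c(x), ∫_{(0,t]} ∫_E |f(y) − f(φ(s, x))| dQ(φ(s,x))(y) dμ_x(s) < ∞. Define 𝒜f(x, t) := f(φ(t, x)) − f(x) + ∫_{(0,t]} (∫_E (f(y) − f(φ(s, x))) dQ(φ(s,x))(y)) dμ_x(s). Then 𝒜f(x,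 0) = 0 and 𝒜f(x, s) + 𝒜f(φ(s, x), t) = 𝒜f(x, s + t) whenever s + t < c(x), i.e. the measure-valued generator applied to f is an additive functional of the SDS φ. -/
open MeasureTheory Filter Topology

open ENNReal

theorem stmt_17 {E : Type*} [MeasurableSpace E]
    (φ : ℝ → E → E) (c : E → EReal) (hSDS : IsSDS φ c)
    (Λ : E → ℝ → ℝ) (hΛ : IsAdditiveFunctional φ c Λ)
    (hmono : ∀ x : E, MonotoneOn (Λ x) (Set.Ici 0))
    (hrc : ∀ (x : E) (t : ℝ), 0 ≤ t → ContinuousWithinAt (Λ x) (Set.Ici t) t)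
    (μ : E → Measure ℝ)
    (hμ : ∀ (x : E) (u v : ℝ), 0 ≤ u → u ≤ v →
      μ x (Set.Ioc u v) = ENNReal.ofReal (Λ x v - Λ x u))
    (Q : E → Measure E) (hQmeas : Measurable Q)
    (hQprob : ∀ y : E, IsProbabilityMeasure (Q y))
    (f : E → ℝ) (hfmeas : Measurable f)
    (hint : ∀ (x : E) (t : ℝ), 0 ≤ t → (t : EReal) < c x →
      ∫⁻ s in Set.Ioc (0 : ℝ) t,
        (∫⁻ y, ENNReal.ofReal |f y - f (φ s x)| ∂(Q (φ s x))) ∂(μ x) < ⊤)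
    (Af : E → ℝ → ℝ)
    (hAf : ∀ (x : E) (t : ℝ),
      Af x t = f (φ t x) - f x +
        ∫ s in Set.Ioc (0 : ℝ) t, (∫ y, (f y - f (φ s x)) ∂(Q (φ s x))) ∂(μ x)) :
    (∀ x, Af x 0 = 0) ∧
    (∀ (x : E) (s t : ℝ), 0 ≤ s → 0 ≤ t → ((s + t : ℝ) : EReal) < c x →
      Af x s + Af (φ s x) t = Af x (s + t)) := by

  obtain ⟨hφmeas, hcpos, hφ0, hφadd, hφc⟩ := hSDS
  obtain ⟨hΛmeas, hΛrc, hΛ0, hΛadd⟩ := hΛ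
  -- the jump kernel
  let κ : ProbabilityTheory.Kernel E E := ⟨Q, hQmeas⟩
  haveI : ProbabilityTheory.IsMarkovKernel κ := ⟨hQprob⟩
  -- measurability of the inner integral along the flow
  have hg : ∀ z : E, StronglyMeasurable
      (fun u : ℝ => ∫ y, (f y - f (φ u z)) ∂(Q (φ u z))) := by
    intro z
    have hF : StronglyMeasurable (fun p : E × E => f p.2 - f p.1) :=
      ((hfmeas.comp measurable_snd).sub (hfmeas.comp measurable_fst)).stronglyMeasurable
    have h1 : StronglyMeasurable (fun w : E => ∫ y, (f y - f w) ∂(κ w)) :=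
      hF.integral_kernel_prod_right'
    have h2 : Measurable (fun u : ℝ => φ u z) :=
      hφmeas.comp (measurable_id.prodMk measurable_const)
    exact h1.comp_measurable h2
  have hbound : ∀ z : E, ∀ u : ℝ,
      (‖∫ y, (f y - f (φ u z)) ∂(Q (φ u z))‖₊ : ℝ≥0∞)
        ≤ ∫⁻ y, ENNReal.ofReal |f y - f (φ u z)| ∂(Q (φ u z)) := by
    intro z u
    refine le_trans (enorm_integral_le_lintegral_enorm _) (le_of_eq ?_)
    exact lintegral_congr fun y => Real.enorm_eq_ofReal_abs _
  refine ⟨fun x => ?_, fun x s t hs ht hst => ?_⟩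
  · rw [hAf, hφ0]
    simp
  · have hst' : (0 : ℝ) ≤ s + t := by linarith
    -- integrability of the inner integral on (0, s+t]
    have hInt : IntegrableOn (fun u : ℝ => ∫ y, (f y - f (φ u x)) ∂(Q (φ u x)))
        (Set.Ioc 0 (s + t)) (μ x) := by
      refine ⟨(hg x).aestronglyMeasurable, ?_⟩
      exact lt_of_le_of_lt (lintegral_mono fun u => hbound x u) (hint x (s + t) hst' hst)
    have hInt1 : IntegrableOn (fun u : ℝ => ∫ y, (f y - f (φ u x)) ∂(Q (φ u x)))
        (Set.Ioc 0 s) (μ x) := hInt.mono_set (Set.Ioc_subset_Ioc_right (by linarith))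
    have hInt2 : IntegrableOn (fun u : ℝ => ∫ y, (f y - f (φ u x)) ∂(Q (φ u x)))
        (Set.Ioc s (s + t)) (μ x) := hInt.mono_set (Set.Ioc_subset_Ioc_left hs)
    -- the key measure identity
    have hcompute : ∀ a b : ℝ,
        (μ (φ s x)).restrict (Set.Ioc 0 t) (Set.Ioc a b)
          = (μ x).restrict (Set.Ioc s (s + t)) ((fun r => r - s) ⁻¹' Set.Ioc a b) ∧
        (μ (φ s x)).restrict (Set.Ioc 0 t) (Set.Ioc a b) ≠ ⊤ := by
      intro a b
      rw [Measure.restrict_apply measurableSet_Ioc, Set.preimage_sub_const_Ioc,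
        Measure.restrict_apply measurableSet_Ioc, Set.Ioc_inter_Ioc, Set.Ioc_inter_Ioc]
      have e1 : max (a + s) s = max a 0 + s := by
        rw [← max_add_add_right a 0 s, zero_add]
      have e2 : min (b + s) (s + t) = min b t + s := by
        rw [add_comm s t, ← min_add_add_right b t s]
      rcases lt_or_ge (max a 0) (min b t) with h | h
      · have h0 : (0 : ℝ) ≤ max a 0 := le_max_right a 0
        have hvt : min b t ≤ t := min_le_right b t
        have hc1 : ((s + max a 0 : ℝ) : EReal) < c x :=
          lt_of_le_of_lt (EReal.coe_le_coe_iff.2 (by linarith)) hst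
        have hc2 : ((s + min b t : ℝ) : EReal) < c x :=
          lt_of_le_of_lt (EReal.coe_le_coe_iff.2 (by linarith)) hst
        have A1 : Λ x s + Λ (φ s x) (max a 0) = Λ x (s + max a 0) :=
          hΛadd x s _ hs h0 hc1
        have A2 : Λ x s + Λ (φ s x) (min b t) = Λ x (s + min b t) :=
          hΛadd x s _ hs (le_trans h0 h.le) hc2
        rw [hμ (φ s x) _ _ h0 h.le, e1, e2,
          hμ x _ _ (by linarith) (by linarith)]
        constructor
        · congr 1
          rw [add_comm (max a 0) s, add_comm (min b t) s]
          linarith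
        · exact ENNReal.ofReal_ne_top
      · have h' : ¬ max (a + s) s < min (b + s) (s + t) := by
          rw [e1, e2]
          intro hlt
          exact absurd (by linarith : max a 0 < min b t) (not_lt.2 h)
        rw [Set.Ioc_eq_empty (not_lt.2 h), Set.Ioc_eq_empty h']
        simp
    have hmeq : (μ (φ s x)).restrict (Set.Ioc 0 t)
        = Measure.map (fun r => r - s) ((μ x).restrict (Set.Ioc s (s + t))) := by
      refine MeasureTheory.Measure.ext_of_Ioc' _ _
        (fun a b _ => (hcompute a b).2) (fun a b _ => ?_)
      rw [(hcompute a b).1,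
        Measure.map_apply (measurable_sub_const s) measurableSet_Ioc]
    -- change of variables
    have hI2 : (∫ u in Set.Ioc (0 : ℝ) t,
          (∫ y, (f y - f (φ u (φ s x))) ∂(Q (φ u (φ s x)))) ∂(μ (φ s x)))
        = ∫ r in Set.Ioc s (s + t),
            (∫ y, (f y - f (φ r x)) ∂(Q (φ r x))) ∂(μ x) := by
      rw [show (∫ u in Set.Ioc (0 : ℝ) t,
          (∫ y, (f y - f (φ u (φ s x))) ∂(Q (φ u (φ s x)))) ∂(μ (φ s x)))
        = ∫ u, (∫ y, (f y - f (φ u (φ s x))) ∂(Q (φ u (φ s x))))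
            ∂((μ (φ s x)).restrict (Set.Ioc 0 t)) from rfl, hmeq,
        integral_map (measurable_sub_const s).aemeasurable
          ((hg (φ s x)).aestronglyMeasurable)]
      refine setIntegral_congr_fun measurableSet_Ioc fun r hr => ?_
      have hrs : φ (r - s) (φ s x) = φ r x := by
        have h1 := hφadd x s (r - s) hs (by linarith [hr.1])
          (by rw [show s + (r - s) = r by ring]
              exact lt_of_le_of_lt (EReal.coe_le_coe_iff.2 hr.2) hst)
        rwa [show s + (r - s) = r by ring] at h1
      simp only [hrs]
    -- combining the two pieces
    have hsum : (∫ u in Set.Ioc (0 : ℝ) s,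
          (∫ y, (f y - f (φ u x)) ∂(Q (φ u x))) ∂(μ x))
        + (∫ u in Set.Ioc s (s + t),
          (∫ y, (f y - f (φ u x)) ∂(Q (φ u x))) ∂(μ x))
        = ∫ u in Set.Ioc (0 : ℝ) (s + t),
            (∫ y, (f y - f (φ u x)) ∂(Q (φ u x))) ∂(μ x) := by
      rw [← setIntegral_union (Set.Ioc_disjoint_Ioc_of_le le_rfl) measurableSet_Ioc hInt1 hInt2,
        Set.Ioc_union_Ioc_eq_Ioc hs (by linarith)]
    have hφst : φ t (φ s x) = φ (s + t) x := hφadd x s t hs ht hst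
    rw [hAf x s, hAf (φ s x) t, hAf x (s + t), hφst, hI2]
    linarith [hsum]
end

section
/- Let F : [0,∞) → [0,1] be nonincreasing and right-continuous with F(0) = 1, let c := inf{t ≥ 0 : F(t) = 0} (with c = ∞ if F never vanishes), let ν be the Lebesgue–Stieltjes measure of the nondecreasing right-continuous function t ↦ 1 − F(t), and define Λ(t) := ∫_{(0,t]} F(s−)⁻¹ dν(s) for t < c, where F(s−) denotes the left limit of F at s. Then for every t with 0 < t < c, the jump of Λ at t equals ΔΛ(t) := Λ(t) − Λ(t−) = (F(t−) − F(t)) / F(t−) = 1 − F(t)/F(t−); in particular 0 ≤ ΔΛ(t) < 1 whenever F(t) > 0. -/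
open MeasureTheory Filter Topology

theorem stmt_18
    (F : ℝ → ℝ)
    (hF01 : ∀ t : ℝ, 0 ≤ F t ∧ F t ≤ 1)
    (hF0 : F 0 = 1)
    (hFanti : AntitoneOn F (Set.Ici 0))
    (hFrc : ∀ t : ℝ, 0 ≤ t → ContinuousWithinAt F (Set.Ici t) t)
    (c : EReal)
    (hc : c = sInf {v : EReal | ∃ u : ℝ, 0 ≤ u ∧ v = (u : EReal) ∧ F u = 0})
    (ν : Measure ℝ)
    (hν : ∀ u v : ℝ, 0 ≤ u → u ≤ v →
      ν (Set.Ioc u v) = ENNReal.ofReal ((1 - F v) - (1 - F u)))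
    (Λ : ℝ → ℝ)
    (hΛ : ∀ t : ℝ, Λ t = ∫ s in Set.Ioc (0 : ℝ) t, (Function.leftLim F s)⁻¹ ∂ν) :
    ∀ t : ℝ, 0 < t → (t : EReal) < c →
      (Λ t - Function.leftLim Λ t = (Function.leftLim F t - F t) / Function.leftLim F t ∧
       Λ t - Function.leftLim Λ t = 1 - F t / Function.leftLim F t ∧
       (0 < F t → 0 ≤ Λ t - Function.leftLim Λ t ∧ Λ t - Function.leftLim Λ t < 1)) := by
  intro t ht0 htc
  -- F t > 0
  have hFt : 0 < F t := by
    rcases (hF01 t).1.lt_or_eq with h | h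
    · exact h
    · exfalso
      have hmem : (t : EReal) ∈ {v : EReal | ∃ u : ℝ, 0 ≤ u ∧ v = (u : EReal) ∧ F u = 0} :=
        ⟨t, ht0.le, rfl, h.symm⟩
      have : c ≤ (t : EReal) := hc ▸ sInf_le hmem
      exact absurd htc (not_lt.2 this)
  -- globalized antitone version of F
  set F' : ℝ → ℝ := fun x => F (max x 0) with hF'def
  have hF'eq : ∀ x : ℝ, 0 ≤ x → F' x = F x := by
    intro x hx; simp [hF'def, max_eq_left hx]
  have hA : Antitone F' := by
    intro x y hxy
    exact hFanti (Set.mem_Ici.2 (le_max_right _ _)) (Set.mem_Ici.2 (le_max_right _ _)) (max_le_max hxy le_rfl)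
  have hneb : ∀ x : ℝ, 𝓝[<] x ≠ ⊥ := fun x => (nhdsLT_neBot x).ne
  have hLL : ∀ x : ℝ, 0 < x → Function.leftLim F x = Function.leftLim F' x := by
    intro x hx
    apply leftLim_eq_of_tendsto
    apply (hA.tendsto_leftLim x).congr'
    filter_upwards [Ioo_mem_nhdsLT_of_mem (Set.mem_Ioc.2 ⟨hx, le_rfl⟩)] with s hs
    exact hF'eq s hs.1.le
  set g : ℝ → ℝ := fun x => (Function.leftLim F' x)⁻¹ with hgdef
  have hmg : Measurable g := hA.leftLim.measurable.inv
  -- bounds on Ioc 0 t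
  have hlb : ∀ x ∈ Set.Ioc (0 : ℝ) t, F t ≤ Function.leftLim F' x := by
    intro x hx
    have h1 : F' x ≤ Function.leftLim F' x := hA.le_leftLim le_rfl
    have h2 : F t ≤ F x := hFanti hx.1.le (le_trans hx.1.le hx.2) hx.2
    rw [hF'eq x hx.1.le] at h1
    linarith
  have hgpos : ∀ x ∈ Set.Ioc (0 : ℝ) t, 0 < Function.leftLim F' x :=
    fun x hx => lt_of_lt_of_le hFt (hlb x hx)
  have hgle : ∀ x ∈ Set.Ioc (0 : ℝ) t, g x ≤ (F t)⁻¹ := by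
    intro x hx
    exact inv_anti₀ hFt (hlb x hx)
  have hgnn : ∀ x ∈ Set.Ioc (0 : ℝ) t, 0 ≤ g x :=
    fun x hx => (inv_nonneg).2 (hgpos x hx).le
  -- ν of Ioc intervals
  have hνIoc : ∀ u v : ℝ, 0 ≤ u → u ≤ v → ν (Set.Ioc u v) = ENNReal.ofReal (F u - F v) := by
    intro u v hu huv
    rw [hν u v hu huv]; ring_nf
  have hfin : ν (Set.Ioc 0 t) < ⊤ := by
    rw [hνIoc 0 t le_rfl ht0.le]; exact ENNReal.ofReal_lt_top
  set μ : Measure ℝ := ν.restrict (Set.Ioc 0 t) with hμdef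
  have hμfin : IsFiniteMeasure μ := by
    constructor
    rw [hμdef, Measure.restrict_apply_univ]
    exact hfin
  -- integrability of g on Ioc 0 t
  have hint : IntegrableOn g (Set.Ioc 0 t) ν := by
    refine Integrable.mono' (integrable_const ((F t)⁻¹)) hmg.aestronglyMeasurable ?_
    filter_upwards [ae_restrict_mem measurableSet_Ioc] with x hx
    rw [Real.norm_eq_abs, abs_of_nonneg (hgnn x hx)]
    exact hgle x hx
  -- rewrite Λ via g
  have hΛg : ∀ s : ℝ, 0 < s → s ≤ t → Λ s = ∫ x in Set.Ioc (0 : ℝ) s, g x ∂ν := by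
    intro s hs hst
    rw [hΛ s]
    apply setIntegral_congr_fun measurableSet_Ioc
    intro x hx
    simp only [hgdef]
    rw [hLL x hx.1]
  -- difference formula
  have hadd : ∀ s : ℝ, 0 < s → s < t →
      Λ t - Λ s = ∫ x in Set.Ioc s t, g x ∂ν := by
    intro s hs hst
    rw [hΛg s hs hst.le, hΛg t ht0 le_rfl]
    have hsplit : Set.Ioc (0 : ℝ) t = Set.Ioc 0 s ∪ Set.Ioc s t :=
      (Set.Ioc_union_Ioc_eq_Ioc hs.le hst.le).symm
    rw [hsplit, setIntegral_union (Set.Ioc_disjoint_Ioc_of_le le_rfl) measurableSet_Ioc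
      (hint.mono_set (by rw [hsplit]; exact Set.subset_union_left))
      (hint.mono_set (by rw [hsplit]; exact Set.subset_union_right))]
    ring
  -- ν of the singleton {t}
  set a : ℝ := Function.leftLim F' t with hadef
  have hba : F t ≤ a := by
    have h1 : F' t ≤ a := hA.le_leftLim le_rfl
    rwa [hF'eq t ht0.le] at h1
  have ha0 : 0 < a := lt_of_lt_of_le hFt hba
  have hνt : ν {t} = ENNReal.ofReal (a - F t) := by
    set u : ℕ → ℝ := fun n => max (t - 1 / (n + 1)) (t / 2) with hudef
    have hu0 : ∀ n, 0 ≤ u n := fun n => le_trans (half_pos ht0).le (le_max_right _ _)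
    have hut : ∀ n, u n < t := by
      intro n
      apply max_lt
      · have : (0 : ℝ) < 1 / (n + 1) := by positivity
        linarith
      · linarith
    have hmono : Monotone u := by
      intro n m hnm
      apply max_le_max _ le_rfl
      have h1 : (1 : ℝ) / (m + 1) ≤ 1 / (n + 1) := by
        apply one_div_le_one_div_of_le
        · positivity
        · exact_mod_cast Nat.succ_le_succ hnm
      linarith
    have hanti : Antitone fun n => Set.Ioc (u n) t := fun n m h =>
      Set.Ioc_subset_Ioc_left (hmono h)
    have hiInter : (⋂ n, Set.Ioc (u n) t) = {t} := by
      ext x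
      simp only [Set.mem_iInter, Set.mem_Ioc, Set.mem_singleton_iff]
      constructor
      · intro h
        refine le_antisymm (h 0).2 ?_
        by_contra hx
        push_neg at hx
        obtain ⟨n, hn⟩ := exists_nat_one_div_lt (sub_pos.2 hx)
        have := (h n).1
        have : t - 1 / (n + 1) < x := lt_of_le_of_lt (le_max_left _ _) this
        linarith
      · rintro rfl
        exact fun n => ⟨hut n, le_rfl⟩
    have hmeas : Tendsto (fun n => ν (Set.Ioc (u n) t)) atTop (𝓝 (ν {t})) := by
      have := tendsto_measure_iInter_atTop (μ := ν)
        (fun n => measurableSet_Ioc.nullMeasurableSet) hanti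
        ⟨0, by rw [hνIoc (u 0) t (hu0 0) (hut 0).le]; exact ENNReal.ofReal_ne_top⟩
      rwa [hiInter] at this
    have hutend : Tendsto u atTop (𝓝[<] t) := by
      apply tendsto_nhdsWithin_of_tendsto_nhds_of_eventually_within
      · have h1 : Tendsto (fun n : ℕ => t - 1 / (n + 1)) atTop (𝓝 (t - 0)) :=
          tendsto_const_nhds.sub tendsto_one_div_add_atTop_nhds_zero_nat
        have h2 : Tendsto u atTop (𝓝 (max (t - 0) (t / 2))) :=
          (h1.max tendsto_const_nhds)
        rw [sub_zero, max_eq_left (by linarith)] at h2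
        exact h2
      · exact Eventually.of_forall fun n => hut n
    have hFtend : Tendsto (fun n => ν (Set.Ioc (u n) t)) atTop
        (𝓝 (ENNReal.ofReal (a - F t))) := by
      have h1 : Tendsto (fun n => F (u n)) atTop (𝓝 a) := by
        have := (hA.tendsto_leftLim t).comp hutend
        apply this.congr
        intro n
        exact hF'eq (u n) (hu0 n)
      have h2 : Tendsto (fun n => F (u n) - F t) atTop (𝓝 (a - F t)) :=
        h1.sub tendsto_const_nhds
      have h3 := (ENNReal.continuous_ofReal.tendsto _).comp h2
      apply h3.congr
      intro n
      simp only [Function.comp]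
      rw [hνIoc (u n) t (hu0 n) (hut n).le]
    exact tendsto_nhds_unique hmeas hFtend
  -- dominated convergence
  have hμt : μ {t} = ν {t} := by
    rw [hμdef, Measure.restrict_apply (measurableSet_singleton t),
      Set.inter_eq_left.2 (Set.singleton_subset_iff.2 (Set.mem_Ioc.2 ⟨ht0, le_rfl⟩))]
  have hDCT : Tendsto (fun s => ∫ x, (Set.Ioc s t).indicator g x ∂μ) (𝓝[<] t)
      (𝓝 (∫ x, ({t} : Set ℝ).indicator g x ∂μ)) := by
    apply tendsto_integral_filter_of_dominated_convergence (fun _ => (F t)⁻¹)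
    · exact Eventually.of_forall fun s =>
        (hmg.indicator measurableSet_Ioc).aestronglyMeasurable
    · apply Eventually.of_forall
      intro s
      filter_upwards [ae_restrict_mem measurableSet_Ioc] with x hx
      rw [Real.norm_eq_abs]
      by_cases hxs : x ∈ Set.Ioc s t
      · rw [Set.indicator_of_mem hxs, abs_of_nonneg (hgnn x hx)]
        exact hgle x hx
      · rw [Set.indicator_of_notMem hxs]
        simp [inv_nonneg.2 hFt.le]
    · exact integrable_const _
    · apply ae_of_all
      intro x
      rcases lt_trichotomy x t with hx | hx | hx
      · have : ∀ᶠ s in 𝓝[<] t, (Set.Ioc s t).indicator g x = 0 := by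
          filter_upwards [Ioo_mem_nhdsLT_of_mem (Set.mem_Ioc.2 ⟨hx, le_rfl⟩)] with s hs
          exact Set.indicator_of_notMem (fun h => absurd h.1 (not_lt.2 hs.1.le)) g
        rw [Set.indicator_of_notMem (by simp [ne_of_lt hx]) g]
        exact Tendsto.congr' (this.mono fun s hs => hs.symm) tendsto_const_nhds
      · subst hx
        have : ∀ᶠ s in 𝓝[<] x, (Set.Ioc s x).indicator g x = g x := by
          filter_upwards [self_mem_nhdsWithin] with s hs
          exact Set.indicator_of_mem (Set.mem_Ioc.2 ⟨hs, le_rfl⟩) g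
        rw [Set.indicator_of_mem (Set.mem_singleton _) g]
        exact Tendsto.congr' (this.mono fun s hs => hs.symm) tendsto_const_nhds
      · have : ∀ s : ℝ, (Set.Ioc s t).indicator g x = 0 := fun s =>
          Set.indicator_of_notMem (fun h => absurd h.2 (not_le.2 hx)) g
        rw [Set.indicator_of_notMem (by simp [ne_of_gt hx]) g]
        exact Tendsto.congr (fun s => (this s).symm) tendsto_const_nhds
  -- identify the limit
  have hsing : ∫ x, ({t} : Set ℝ).indicator g x ∂μ = (ν {t}).toReal * g t := by
    rw [integral_indicator (measurableSet_singleton t), integral_singleton, measureReal_def, hμt, smul_eq_mul]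
  -- relate the DCT integrand to Λ t - Λ s
  have hev : ∀ᶠ s in 𝓝[<] t, Λ s = Λ t - ∫ x, (Set.Ioc s t).indicator g x ∂μ := by
    filter_upwards [Ioo_mem_nhdsLT_of_mem (Set.mem_Ioc.2 ⟨ht0, le_rfl⟩)] with s hs
    have hsub : Set.Ioc s t ⊆ Set.Ioc (0 : ℝ) t := Set.Ioc_subset_Ioc_left hs.1.le
    have : ∫ x, (Set.Ioc s t).indicator g x ∂μ = ∫ x in Set.Ioc s t, g x ∂ν := by
      rw [integral_indicator measurableSet_Ioc, hμdef,
        Measure.restrict_restrict measurableSet_Ioc, Set.inter_eq_left.2 hsub]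
    rw [this, ← hadd s hs.1 hs.2]
    ring
  -- the jump
  have hjump : Λ t - Function.leftLim Λ t = (ν {t}).toReal * g t := by
    have hT : Tendsto Λ (𝓝[<] t) (𝓝 (Λ t - (ν {t}).toReal * g t)) := by
      rw [← hsing]
      exact Tendsto.congr' (hev.mono fun s hs => hs.symm) (tendsto_const_nhds.sub hDCT)
    rw [leftLim_eq_of_tendsto hT]
    ring
  have hνtr : (ν {t}).toReal = a - F t := by
    rw [hνt, ENNReal.toReal_ofReal (by linarith)]
  have hgt : g t = a⁻¹ := rfl
  have hkey : Λ t - Function.leftLim Λ t = (a - F t) / a := by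
    rw [hjump, hνtr, hgt, div_eq_mul_inv]
  have hLLt : Function.leftLim F t = a := hLL t ht0
  refine ⟨?_, ?_, ?_⟩
  · rw [hkey, hLLt]
  · rw [hkey, hLLt]
    rw [div_eq_iff ha0.ne', sub_mul, div_mul_cancel₀ _ ha0.ne', one_mul]
  · intro _
    constructor
    · rw [hkey]
      exact div_nonneg (by linarith) ha0.le
    · rw [hkey]
      rw [div_lt_one ha0]
      linarith
end
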